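/- Let p ∈ (1,∞), q = p/(p-1), and let F : V → [0,∞) on a real vector space V be given by F(v) = (l(v)[v])^{1/p}, where l(v)[w] is linear in w, positively (p−1)-homogeneous in v (l(λv) = λ^{p-1} l(v) for λ > 0), satisfies the Hölder bound l(v)[w] ≤ (l(w)[w])^{1/p}(l(v)[v])^{1/q} for all v, w, and l(v)[v] ≥ 0 with l(v)[v] = 0 iff v = 0. Then l is injective as a map from V to V*: if l(v) = l(w) as linear functionals, then v = w, provided the equality case of the Hölder bound implies w = Cv for some C ≥ 0. -/

import Mathlib

/-- Abstract injectivity of the Finsler pairing: if `l(v)[w]` is linear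
in `w`, positively `(p−1)`-homogeneous in `v`, satisfies the Hölder bound
`l(v)[w] ≤ (l(w)[w])^{1/p} (l(v)[v])^{1/q}`, is nonnegative and definite on the
diagonal, and the equality case of the Hölder bound forces proportionality with a
nonnegative constant, then `l` is injective: `l(v) = l(w)` implies `v = w`. -/
theorem finsler_pairing_injective {V : Type*} [AddCommGroup V] [Module ℝ V]
    (p q : ℝ) (hp : 1 < p) (hq : q = p / (p - 1))
    (l : V → V → ℝ)
    (hlin : ∀ v, IsLinearMap ℝ (l v))
    (hhom : ∀ c : ℝ, 0 < c → ∀ v w, l (c • v) w = c ^ (p - 1) * l v w)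
    (hholder : ∀ v w, l v w ≤ l w w ^ (1 / p) * l v v ^ (1 / q))
    (hnn : ∀ v, 0 ≤ l v v)
    (hdef : ∀ v, l v v = 0 ↔ v = 0)
    (heqcase : ∀ v w, 0 < l v v → 0 < l w w →
      l v w = l w w ^ (1 / p) * l v v ^ (1 / q) → ∃ C : ℝ, 0 ≤ C ∧ w = C • v) :
    ∀ v w, (∀ u, l v u = l w u) → v = w := by
  have hp1 : 0 < p - 1 := by linarith
  have hzero : ∀ u : V, l 0 u = 0 := by
    intro u
    have h := hhom 2 (by norm_num) 0 u
    rw [smul_zero] at h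
    have h2 : (1:ℝ) < (2:ℝ) ^ (p - 1) :=
      Real.one_lt_rpow_iff_of_pos (by norm_num) |>.2 (Or.inl ⟨by norm_num, hp1⟩)
    have hx : l 0 u * ((2:ℝ) ^ (p - 1) - 1) = 0 := by nlinarith [h]
    rcases mul_eq_zero.1 hx with h' | h'
    · exact h'
    · linarith
  intro v w h
  by_cases hv : v = 0
  · subst hv
    have : l w w = 0 := by rw [← h w, hzero]
    exact ((hdef w).1 this).symm
  by_cases hw : w = 0
  · subst hw
    have : l v v = 0 := by rw [h v, hzero]
    exact (hdef v).1 this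
  have ha : 0 < l v v := lt_of_le_of_ne (hnn v) (fun e => hv ((hdef v).1 e.symm))
  have hb : 0 < l w w := lt_of_le_of_ne (hnn w) (fun e => hw ((hdef w).1 e.symm))
  have hp0 : p ≠ 0 := by linarith
  have hq' : 1 / p + 1 / q = 1 := by
    rw [hq]; field_simp; ring
  have hvw : l v w = l w w := h w
  have hwv : l w v = l v v := (h v).symm
  have H1 : l w w ≤ l w w ^ (1 / p) * l v v ^ (1 / q) := hvw ▸ hholder v w
  have H2 : l v v ≤ l v v ^ (1 / p) * l w w ^ (1 / q) := hwv ▸ hholder w v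
  have hXY : (l w w ^ (1 / p) * l v v ^ (1 / q)) * (l v v ^ (1 / p) * l w w ^ (1 / q))
      = l v v * l w w := by
    rw [show (l w w ^ (1 / p) * l v v ^ (1 / q)) * (l v v ^ (1 / p) * l w w ^ (1 / q))
        = (l v v ^ (1 / p) * l v v ^ (1 / q)) * (l w w ^ (1 / p) * l w w ^ (1 / q)) by ring,
      ← Real.rpow_add ha, ← Real.rpow_add hb, hq', Real.rpow_one, Real.rpow_one]
  have hXpos : 0 < l w w ^ (1 / p) * l v v ^ (1 / q) :=
    mul_pos (Real.rpow_pos_of_pos hb _) (Real.rpow_pos_of_pos ha _)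
  have hYpos : 0 < l v v ^ (1 / p) * l w w ^ (1 / q) :=
    mul_pos (Real.rpow_pos_of_pos ha _) (Real.rpow_pos_of_pos hb _)
  have heq : l v w = l w w ^ (1 / p) * l v v ^ (1 / q) := by
    rw [hvw]
    by_contra hne
    have hlt : l w w < l w w ^ (1 / p) * l v v ^ (1 / q) := lt_of_le_of_ne H1 hne
    nlinarith [hXY, H2, hlt, hb, hYpos]
  obtain ⟨C, hC0, hCw⟩ := heqcase v w ha hb heq
  have hCpos : 0 < C := by
    rcases hC0.lt_or_eq with h' | h'
    · exact h'
    · exfalso; apply hw; rw [hCw, ← h', zero_smul]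
  have hhC := hhom C hCpos v w
  rw [← hCw, hvw] at hhC
  have hCrw : C ^ (p - 1) = 1 := by
    have : l w w * (C ^ (p - 1) - 1) = 0 := by nlinarith [hhC]
    rcases mul_eq_zero.1 this with h' | h'
    · linarith
    · linarith
  have hC1 : C = 1 := by
    rcases lt_trichotomy C 1 with h' | h' | h'
    · exfalso
      have := Real.rpow_lt_one hC0 h' hp1
      rw [hCrw] at this; exact lt_irrefl _ this
    · exact h'
    · exfalso
      have := Real.one_lt_rpow_iff_of_pos hCpos |>.2 (Or.inl ⟨h', hp1⟩)
      rw [hCrw] at this; exact lt_irrefl _ this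
  rw [hCw, hC1, one_smul]
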